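/- (KL-controlled deviation of the mixed-policy return, pointwise form.) Suppose 0 ≤ r(s,a) ≤ R_max for all s ∈ S and a ∈ A, and suppose that for every state s, π^s(s)(a) > 0 whenever π^t(s)(a) > 0. Let π_mix be the mixed policy determined by teacher π^t, student π^s, and intervention indicator T : S → {0,1}. Then |J(π_mix) − J(π^t)| ≤ (√2 · R_max/(1−γ)²) · E_{s ~ ν^{π_mix,μ}}[ (1 − T(s)) · √(D_KL(π^t(s) ‖ π^s(s))) ]. -/

import Mathlib

open scoped BigOperators

section MDPDefs

variable {S A : Type*} [Fintype S] [Fintype A]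

/-- Expectation of a real-valued function under a PMF on a finite type (a finite sum). -/
noncomputable def pmfExp {X : Type*} [Fintype X] (p : PMF X) (f : X → ℝ) : ℝ :=
  ∑ x, (p x).toReal * f x

/-- Time-`t` state distribution `d_t^{π,μ}`:
`d_0 = μ` and `d_{t+1}` is obtained by sampling `x ~ d_t`, `a ~ π x`, `s' ~ P x a`. -/
noncomputable def stateDist (P : S → A → PMF S) (π : S → PMF A) (μ : PMF S) : ℕ → PMF S
  | 0 => μ
  | t + 1 => (stateDist P π μ t).bind fun x => (π x).bind fun a => P x a

/-- State value function `V^π(s) = Σ_t γ^t E_{x ~ d_t^{π, δ_s}} E_{a ~ π x}[r x a]`. -/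
noncomputable def Vval (P : S → A → PMF S) (r : S → A → ℝ) (γ : ℝ) (π : S → PMF A) (s : S) : ℝ :=
  ∑' t : ℕ, γ ^ t * pmfExp (stateDist P π (PMF.pure s) t) fun x => pmfExp (π x) fun a => r x a

/-- Return from an initial distribution: `J(π) = E_{s~μ}[V^π(s)]`. -/
noncomputable def Jret (P : S → A → PMF S) (r : S → A → ℝ) (γ : ℝ) (π : S → PMF A) (μ : PMF S) : ℝ :=
  pmfExp μ (Vval P r γ π)

/-- State-action value `Q^π(s,a) = r(s,a) + γ E_{s' ~ P s a}[V^π(s')]`. -/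
noncomputable def Qval (P : S → A → PMF S) (r : S → A → ℝ) (γ : ℝ) (π : S → PMF A)
    (s : S) (a : A) : ℝ :=
  r s a + γ * pmfExp (P s a) (Vval P r γ π)

/-- Advantage `A^π(s,a) = Q^π(s,a) - V^π(s)`. -/
noncomputable def Adv (P : S → A → PMF S) (r : S → A → ℝ) (γ : ℝ) (π : S → PMF A)
    (s : S) (a : A) : ℝ :=
  Qval P r γ π s a - Vval P r γ π s

/-- Discounted state-visitation distribution `ν^{π,μ}(s) = (1-γ) Σ_t γ^t d_t^{π,μ}(s)`. -/
noncomputable def visit (P : S → A → PMF S) (π : S → PMF A) (μ : PMF S) (γ : ℝ) (s : S) : ℝ :=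
  (1 - γ) * ∑' t : ℕ, γ ^ t * (stateDist P π μ t s).toReal

/-- `ℓ¹` distance between two PMFs on a finite type. -/
noncomputable def l1Dist {X : Type*} [Fintype X] (p q : PMF X) : ℝ :=
  ∑ x, |(p x).toReal - (q x).toReal|

/-- KL divergence `D_KL(p‖q) = Σ_{x : p x > 0} p x * log (p x / q x)` on a finite type. -/
noncomputable def pmfKL {X : Type*} [Fintype X] (p q : PMF X) : ℝ :=
  ∑ x, if p x = 0 then 0 else (p x).toReal * Real.log ((p x).toReal / (q x).toReal)

/-- Mixed behavior policy: teacher's action when the intervention indicator is on,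
student's action otherwise. -/
noncomputable def mixPolicy {S A : Type*} (πt πs : S → PMF A) (T : S → Bool) (s : S) : PMF A :=
  if T s then πt s else πs s

/-- Finite-horizon value of a deterministic policy, defined recursively:
`V_0(s) = r s (σ s)` and `V_{k+1}(s) = r s (σ s) + γ E_{s' ~ P s (σ s)}[V_k s']`. -/
noncomputable def Vfin (P : S → A → PMF S) (r : S → A → ℝ) (γ : ℝ) (σ : S → A) : ℕ → S → ℝ
  | 0, s => r s (σ s)
  | k + 1, s => r s (σ s) + γ * pmfExp (P s (σ s)) (Vfin P r γ σ k)

/-- Finite-horizon value of the switching (mixed) policy that at each step picks whichever of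
the two deterministic policies gives the larger continuation value. -/
noncomputable def Wswitch (P : S → A → PMF S) (r : S → A → ℝ) (γ : ℝ)
    (πt πs : S → A) : ℕ → S → ℝ
  | 0, s => max (r s (πt s)) (r s (πs s))
  | k + 1, s =>
      max (r s (πt s) + γ * pmfExp (P s (πt s)) (Wswitch P r γ πt πs k))
          (r s (πs s) + γ * pmfExp (P s (πs s)) (Wswitch P r γ πt πs k))

end MDPDefs



private lemma log_ge_one_sub_inv {y : ℝ} (hy : 0 < y) : 1 - y⁻¹ ≤ Real.log y := by
  have h := Real.log_le_sub_one_of_pos (x := y⁻¹) (by positivity)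
  rw [Real.log_inv] at h
  linarith

private lemma hasDerivAt_xlogx {y : ℝ} (hy : y ≠ 0) :
    HasDerivAt (fun z : ℝ => z * Real.log z) (Real.log y + 1) y := by
  have h := (hasDerivAt_id y).fun_mul (Real.hasDerivAt_log hy)
  refine h.congr_deriv ?_
  simp [mul_inv_cancel₀ hy]

private lemma log_ineq_left {x : ℝ} (hx : 0 < x) (hx1 : x ≤ 1) :
    (x - 1)^2 / 2 ≤ x * Real.log x - x + 1 := by
  set f : ℝ → ℝ := fun z => z * Real.log z - z + 1 - (z - 1)^2 / 2 with hf
  have hD : ∀ y : ℝ, y ≠ 0 → HasDerivAt f (Real.log y - (y - 1)) y := by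
    intro y hy
    have h1 := hasDerivAt_xlogx hy
    have h2 : HasDerivAt (fun z : ℝ => (z - 1)^2 / 2) (y - 1) y := by
      have := (((hasDerivAt_id y).sub_const 1).fun_pow 2).div_const 2
      refine this.congr_deriv ?_
      simp only [id_eq]
      ring
    have := (((h1.fun_sub (hasDerivAt_id y)).add_const 1).fun_sub h2)
    refine this.congr_deriv ?_
    ring
  have hanti : AntitoneOn f (Set.Icc x 1) := by
    apply antitoneOn_of_deriv_nonpos (convex_Icc x 1)
    · intro y hy
      exact (hD y (by rcases hy with ⟨h1, _⟩; linarith)).continuousAt.continuousWithinAt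
    · intro y hy
      rw [interior_Icc] at hy
      exact (hD y (by rcases hy with ⟨h1, _⟩; linarith)).differentiableAt.differentiableWithinAt
    · intro y hy
      rw [interior_Icc] at hy
      rcases hy with ⟨h1, h2⟩
      rw [(hD y (by linarith)).deriv]
      have := Real.log_le_sub_one_of_pos (lt_trans hx h1)
      linarith
  have hfx := hanti ⟨le_refl x, hx1⟩ ⟨hx1, le_refl 1⟩ hx1
  have : f 1 = 0 := by simp [hf]
  rw [this] at hfx
  simp only [hf] at hfx
  linarith

private lemma log_ineq_right {x : ℝ} (hx : 1 ≤ x) :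
    (x - 1)^2 / (2 * x) ≤ x * Real.log x - x + 1 := by
  set f : ℝ → ℝ := fun z => z * Real.log z - z + 1 - (z - 1)^2 / (2 * z) with hf
  have hD : ∀ y : ℝ, 0 < y →
      HasDerivAt f (Real.log y - (y^2 - 1)/(2 * y^2)) y := by
    intro y hy
    have h1 := hasDerivAt_xlogx hy.ne'
    have h2 : HasDerivAt (fun z : ℝ => (z - 1)^2 / (2 * z)) ((y^2 - 1)/(2 * y^2)) y := by
      have := HasDerivAt.fun_div (((hasDerivAt_id y).sub_const 1).fun_pow 2)
        ((hasDerivAt_id y).const_mul 2) (by positivity : (2:ℝ) * y ≠ 0)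
      refine this.congr_deriv ?_
      simp only [id_eq]
      field_simp
      ring
    have := (((h1.fun_sub (hasDerivAt_id y)).add_const 1).fun_sub h2)
    refine this.congr_deriv ?_
    ring
  have hmono : MonotoneOn f (Set.Icc 1 x) := by
    apply monotoneOn_of_deriv_nonneg (convex_Icc 1 x)
    · intro y hy
      exact (hD y (by rcases hy with ⟨h1, _⟩; linarith)).continuousAt.continuousWithinAt
    · intro y hy
      rw [interior_Icc] at hy
      exact (hD y (by rcases hy with ⟨h1, _⟩; linarith)).differentiableAt.differentiableWithinAt
    · intro y hy
      rw [interior_Icc] at hy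
      rcases hy with ⟨h1, h2⟩
      have hy0 : (0:ℝ) < y := by linarith
      rw [(hD y hy0).deriv]
      have hlog := log_ge_one_sub_inv hy0
      have key : 1 - y⁻¹ - (y^2 - 1)/(2 * y^2) = (y-1)^2/(2*y^2) := by
        field_simp
        ring
      have hnn : (0:ℝ) ≤ (y-1)^2/(2*y^2) := by positivity
      linarith
  have hfx := hmono ⟨le_refl 1, hx⟩ ⟨hx, le_refl x⟩ hx
  have : f 1 = 0 := by norm_num [hf]
  rw [this] at hfx
  simp only [hf] at hfx
  linarith

/-- Pointwise KL-vs-chi-square inequality. -/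
private lemma klterm_ge {p q : ℝ} (hp : 0 ≤ p) (hq : 0 ≤ q) (habs : 0 < p → 0 < q) :
    (p - q)^2 / (2 * max p q) ≤ (if p = 0 then 0 else p * Real.log (p / q)) - p + q := by
  rcases eq_or_lt_of_le hp with hp0 | hp0
  · -- p = 0
    rcases eq_or_lt_of_le hq with hq0 | hq0
    · simp [← hp0, ← hq0]
    · rw [← hp0]
      norm_num [max_eq_right hq]
      rw [div_le_iff₀ (by positivity)]
      nlinarith
  · have hq0 : 0 < q := habs hp0
    rw [if_neg (ne_of_gt hp0)]
    set x := p / q with hxdef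
    have hx0 : 0 < x := div_pos hp0 hq0
    have hpx : p = q * x := by rw [hxdef]; field_simp
    rcases le_total x 1 with hx1 | hx1
    · have key := log_ineq_left hx0 hx1
      have hmax : max p q = q := max_eq_right (by nlinarith)
      rw [hmax, hpx]
      have h1 : (q * x - q)^2 / (2 * q) = q * ((x-1)^2 / 2) := by
        field_simp
      rw [h1]
      have h2 : q * x * Real.log x - q * x + q = q * (x * Real.log x - x + 1) := by ring
      rw [h2]
      exact mul_le_mul_of_nonneg_left key hq
    · have key := log_ineq_right hx1
      have hmax : max p q = p := max_eq_left (by nlinarith)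
      rw [hmax, hpx]
      have h1 : (q * x - q)^2 / (2 * (q * x)) = q * ((x-1)^2 / (2 * x)) := by
        field_simp
      rw [h1]
      have h2 : q * x * Real.log x - q * x + q = q * (x * Real.log x - x + 1) := by ring
      rw [h2]
      exact mul_le_mul_of_nonneg_left key hq0.le

section Part2

private lemma pmf_sum_toReal {X : Type*} [Fintype X] (p : PMF X) :
    ∑ x, (p x).toReal = 1 := by
  rw [← ENNReal.toReal_sum (fun a _ => PMF.apply_ne_top p a), ← tsum_fintype (L := SummationFilter.unconditional X), PMF.tsum_coe,
    ENNReal.toReal_one]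

private lemma pinsker_l1 {X : Type*} [Fintype X] (p q : PMF X)
    (habs : ∀ x, 0 < p x → 0 < q x) :
    l1Dist p q ≤ 2 * Real.sqrt (pmfKL p q) := by
  classical
  set P : X → ℝ := fun x => (p x).toReal with hPdef
  set Q : X → ℝ := fun x => (q x).toReal with hQdef
  have hP0 : ∀ x, 0 ≤ P x := fun x => ENNReal.toReal_nonneg
  have hQ0 : ∀ x, 0 ≤ Q x := fun x => ENNReal.toReal_nonneg
  have habs' : ∀ x, 0 < P x → 0 < Q x := by
    intro x hx
    have hpx : p x ≠ 0 := by
      intro h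
      simp [hPdef, h] at hx
    have h2 : q x ≠ 0 := (habs x (pos_iff_ne_zero.mpr hpx)).ne'
    exact ENNReal.toReal_pos h2 (PMF.apply_ne_top q x)
  -- pointwise bound
  have key : ∀ x, (P x - Q x)^2 / (2 * max (P x) (Q x)) ≤
      (if p x = 0 then 0 else P x * Real.log (P x / Q x)) - P x + Q x := by
    intro x
    have h := klterm_ge (hP0 x) (hQ0 x) (habs' x)
    have hcond : (P x = 0) ↔ (p x = 0) := by
      constructor
      · intro h0
        by_contra hne
        exact absurd h0 (ne_of_gt (ENNReal.toReal_pos hne (PMF.apply_ne_top p x)))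
      · intro h0; simp [hPdef, h0]
    by_cases hc : p x = 0
    · simpa [hc, hcond.mpr hc] using h
    · rw [if_neg hc]
      rw [if_neg (fun h0 => hc (hcond.mp h0))] at h
      exact h
  have hsumKL : ∑ x, ((if p x = 0 then 0 else P x * Real.log (P x / Q x)) - P x + Q x)
      = pmfKL p q := by
    rw [pmfKL]
    rw [Finset.sum_add_distrib, Finset.sum_sub_distrib, pmf_sum_toReal p, pmf_sum_toReal q]
    simp only [hPdef, hQdef]
    ring
  have hKLge : ∑ x, (P x - Q x)^2 / (2 * max (P x) (Q x)) ≤ pmfKL p q := by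
    rw [← hsumKL]
    exact Finset.sum_le_sum fun x _ => key x
  have hchi0 : (0:ℝ) ≤ ∑ x, (P x - Q x)^2 / (2 * max (P x) (Q x)) :=
    Finset.sum_nonneg fun x _ => by positivity
  have hKL0 : (0:ℝ) ≤ pmfKL p q := le_trans hchi0 hKLge
  -- Cauchy-Schwarz
  set m : X → ℝ := fun x => 2 * max (P x) (Q x) with hmdef
  have hm0 : ∀ x, 0 ≤ m x := fun x => by
    have := le_max_left (P x) (Q x); have := hP0 x; positivity
  have hl1eq : l1Dist p q = ∑ x, (|P x - Q x| / Real.sqrt (m x)) * Real.sqrt (m x) := by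
    rw [l1Dist]
    apply Finset.sum_congr rfl
    intro x _
    by_cases hmx : m x = 0
    · have hmax : max (P x) (Q x) = 0 := by
        have : (2:ℝ) * max (P x) (Q x) = 0 := hmx
        linarith
      have hPx : P x = 0 := le_antisymm (by rw [← hmax]; exact le_max_left _ _) (hP0 x)
      have hQx : Q x = 0 := le_antisymm (by rw [← hmax]; exact le_max_right _ _) (hQ0 x)
      simp only [show (p x).toReal = P x from rfl, show (q x).toReal = Q x from rfl, hPx, hQx,
        hmx, sub_zero, abs_zero, Real.sqrt_zero, div_zero, zero_mul, mul_zero]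
    · rw [div_mul_cancel₀]
      exact Real.sqrt_ne_zero'.mpr (lt_of_le_of_ne (hm0 x) (Ne.symm hmx))
  have hCS := Finset.sum_mul_sq_le_sq_mul_sq Finset.univ
    (fun x => |P x - Q x| / Real.sqrt (m x)) (fun x => Real.sqrt (m x))
  have hsq1 : ∀ x, (|P x - Q x| / Real.sqrt (m x))^2 = (P x - Q x)^2 / m x := by
    intro x
    rw [div_pow, sq_abs, Real.sq_sqrt (hm0 x)]
  have hsq2 : ∀ x, (Real.sqrt (m x))^2 = m x := fun x => Real.sq_sqrt (hm0 x)
  have hsummle : ∑ x, m x ≤ 4 := by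
    have : ∀ x, m x ≤ 2 * (P x + Q x) := by
      intro x
      rw [hmdef]
      have := max_le_iff.mpr ⟨le_add_of_nonneg_right (hQ0 x), le_add_of_nonneg_left (hP0 x)⟩
      simp only
      nlinarith [le_max_left (P x) (Q x)]
    calc ∑ x, m x ≤ ∑ x, 2 * (P x + Q x) := Finset.sum_le_sum fun x _ => this x
      _ = 4 := by
          rw [← Finset.mul_sum, Finset.sum_add_distrib, pmf_sum_toReal p, pmf_sum_toReal q]
          norm_num
  have hl1sq : (l1Dist p q)^2 ≤ pmfKL p q * 4 := by
    rw [hl1eq]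
    calc (∑ x, (|P x - Q x| / Real.sqrt (m x)) * Real.sqrt (m x))^2
        ≤ (∑ x, (|P x - Q x| / Real.sqrt (m x))^2) * ∑ x, (Real.sqrt (m x))^2 := hCS
      _ = (∑ x, (P x - Q x)^2 / m x) * ∑ x, m x := by
          congr 1
          · exact Finset.sum_congr rfl fun x _ => hsq1 x
          · exact Finset.sum_congr rfl fun x _ => hsq2 x
      _ ≤ pmfKL p q * 4 := by
          apply mul_le_mul _ hsummle (Finset.sum_nonneg fun x _ => hm0 x) hKL0
          exact hKLge
  have hl10 : 0 ≤ l1Dist p q := Finset.sum_nonneg fun x _ => abs_nonneg _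
  have := Real.sqrt_le_sqrt hl1sq
  rw [Real.sqrt_sq hl10] at this
  calc l1Dist p q ≤ Real.sqrt (pmfKL p q * 4) := this
    _ = 2 * Real.sqrt (pmfKL p q) := by
        rw [Real.sqrt_mul hKL0, show (4:ℝ) = 2^2 by norm_num, Real.sqrt_sq (by norm_num)]
        ring

private lemma expDiff_le {X : Type*} [Fintype X] (p q : PMF X) (f : X → ℝ) (M : ℝ)
    (hf : ∀ x, 0 ≤ f x ∧ f x ≤ M) :
    |∑ x, ((p x).toReal - (q x).toReal) * f x| ≤ M / 2 * l1Dist p q := by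
  have h1 : ∑ x, ((p x).toReal - (q x).toReal) * f x
      = ∑ x, ((p x).toReal - (q x).toReal) * (f x - M/2) := by
    have : ∑ x, ((p x).toReal - (q x).toReal) * (f x - M/2)
        = ∑ x, ((p x).toReal - (q x).toReal) * f x
          - (∑ x, ((p x).toReal - (q x).toReal)) * (M/2) := by
      rw [Finset.sum_mul, ← Finset.sum_sub_distrib]
      apply Finset.sum_congr rfl
      intro x _
      ring
    rw [this, Finset.sum_sub_distrib, pmf_sum_toReal p, pmf_sum_toReal q]
    ring
  rw [h1]
  calc |∑ x, ((p x).toReal - (q x).toReal) * (f x - M/2)|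
      ≤ ∑ x, |((p x).toReal - (q x).toReal) * (f x - M/2)| := Finset.abs_sum_le_sum_abs _ _
    _ ≤ ∑ x, |(p x).toReal - (q x).toReal| * (M/2) := by
        apply Finset.sum_le_sum
        intro x _
        rw [abs_mul]
        apply mul_le_mul_of_nonneg_left _ (abs_nonneg _)
        rw [abs_le]
        constructor <;> [linarith [(hf x).1]; linarith [(hf x).2]]
    _ = M / 2 * l1Dist p q := by rw [← Finset.sum_mul, l1Dist]; ring

end Part2


section PmfExpLemmas

variable {X Y : Type*} [Fintype X] [Fintype Y]

private lemma pmfExp_nonneg (p : PMF X) (f : X → ℝ) (h : ∀ x, 0 ≤ f x) : 0 ≤ pmfExp p f :=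
  Finset.sum_nonneg fun x _ => mul_nonneg ENNReal.toReal_nonneg (h x)

private lemma pmfExp_le_of_le (p : PMF X) (f : X → ℝ) (M : ℝ) (h : ∀ x, f x ≤ M) :
    pmfExp p f ≤ M := by
  calc pmfExp p f ≤ ∑ x, (p x).toReal * M :=
        Finset.sum_le_sum fun x _ => mul_le_mul_of_nonneg_left (h x) ENNReal.toReal_nonneg
    _ = M := by rw [← Finset.sum_mul, pmf_sum_toReal, one_mul]

private lemma abs_pmfExp_le (p : PMF X) (f g : X → ℝ) (h : ∀ x, |f x| ≤ g x) :
    |pmfExp p f| ≤ pmfExp p g := by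
  calc |pmfExp p f| ≤ ∑ x, |(p x).toReal * f x| := Finset.abs_sum_le_sum_abs _ _
    _ ≤ pmfExp p g := by
        apply Finset.sum_le_sum
        intro x _
        rw [abs_mul, abs_of_nonneg (ENNReal.toReal_nonneg (a := p x))]
        exact mul_le_mul_of_nonneg_left (h x) ENNReal.toReal_nonneg

private lemma abs_pmfExp_le_const (p : PMF X) (f : X → ℝ) (M : ℝ) (h : ∀ x, |f x| ≤ M) :
    |pmfExp p f| ≤ M :=
  calc |pmfExp p f| ≤ pmfExp p (fun _ => M) := abs_pmfExp_le p f (fun _ => M) h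
    _ ≤ M := pmfExp_le_of_le _ _ _ (fun _ => le_refl M)

private lemma pmfExp_sub (p : PMF X) (f g : X → ℝ) :
    pmfExp p (fun x => f x - g x) = pmfExp p f - pmfExp p g := by
  simp only [pmfExp, mul_sub, Finset.sum_sub_distrib]

private lemma pmfExp_add (p : PMF X) (f g : X → ℝ) :
    pmfExp p (fun x => f x + g x) = pmfExp p f + pmfExp p g := by
  simp only [pmfExp, mul_add, Finset.sum_add_distrib]

private lemma pmfExp_const (p : PMF X) (c : ℝ) : pmfExp p (fun _ => c) = c := by
  rw [pmfExp, ← Finset.sum_mul, pmf_sum_toReal, one_mul]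

private lemma pmfExp_const_mul (p : PMF X) (f : X → ℝ) (c : ℝ) :
    pmfExp p (fun x => c * f x) = c * pmfExp p f := by
  simp only [pmfExp, Finset.mul_sum]
  exact Finset.sum_congr rfl fun x _ => by ring

private lemma pmfExp_congr (p : PMF X) (f g : X → ℝ) (h : ∀ x, f x = g x) :
    pmfExp p f = pmfExp p g :=
  Finset.sum_congr rfl fun x _ => by rw [h x]

private lemma pmfExp_pure (s : X) (f : X → ℝ) : pmfExp (PMF.pure s) f = f s := by
  classical
  rw [pmfExp, Finset.sum_eq_single s]
  · simp
  · intro b _ hb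
    simp [PMF.pure_apply, hb]
  · simp

private lemma pmfExp_bind (p : PMF X) (q : X → PMF Y) (f : Y → ℝ) :
    pmfExp (p.bind q) f = pmfExp p (fun x => pmfExp (q x) f) := by
  classical
  have hto : ∀ y : Y, ((p.bind q) y).toReal = ∑ x, (p x).toReal * (q x y).toReal := by
    intro y
    rw [PMF.bind_apply, tsum_fintype, ENNReal.toReal_sum
      (fun a _ => ENNReal.mul_ne_top (PMF.apply_ne_top p a) (PMF.apply_ne_top (q a) y))]
    simp [ENNReal.toReal_mul]
  simp only [pmfExp, hto, Finset.sum_mul]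
  rw [Finset.sum_comm]
  exact Finset.sum_congr rfl fun x _ => by
    rw [Finset.mul_sum]
    exact Finset.sum_congr rfl fun y _ => by ring

private lemma abs_pmfExp_le_sum (p : PMF X) (f : X → ℝ) : |pmfExp p f| ≤ ∑ x, |f x| := by
  calc |pmfExp p f| ≤ ∑ x, |(p x).toReal * f x| := Finset.abs_sum_le_sum_abs _ _
    _ ≤ ∑ x, |f x| := by
        apply Finset.sum_le_sum
        intro x _
        rw [abs_mul, abs_of_nonneg (ENNReal.toReal_nonneg (a := p x))]
        have h1 : (p x).toReal ≤ 1 := by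
          have := ENNReal.toReal_mono (by simp) (PMF.coe_le_one p x)
          simpa using this
        nlinarith [abs_nonneg (f x)]

end PmfExpLemmas

section MDPLemmas

variable {S A : Type*} [Fintype S] [Fintype A]

private lemma stateDist_succ (P : S → A → PMF S) (π : S → PMF A) (μ : PMF S) (t : ℕ) :
    stateDist P π μ (t + 1) = (stateDist P π μ t).bind fun x => (π x).bind fun a => P x a := rfl

private lemma stateDist_bind {B : Type*} (P : S → A → PMF S) (π : S → PMF A)
    (p : PMF B) (q : B → PMF S) (t : ℕ) :
    stateDist P π (p.bind q) t = p.bind fun b => stateDist P π (q b) t := by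
  induction t with
  | zero => rfl
  | succ t ih =>
      rw [stateDist_succ, ih, PMF.bind_bind]
      rfl

private lemma stateDist_front (P : S → A → PMF S) (π : S → PMF A) (μ : PMF S) (t : ℕ) :
    stateDist P π μ (t + 1)
      = stateDist P π (μ.bind fun x => (π x).bind fun a => P x a) t := by
  induction t with
  | zero => rfl
  | succ t ih => rw [stateDist_succ, ih, stateDist_succ]

private lemma stateDist_eq_bind (P : S → A → PMF S) (π : S → PMF A) (μ : PMF S) (t : ℕ) :
    stateDist P π μ t = μ.bind fun s => stateDist P π (PMF.pure s) t := by
  conv_lhs => rw [← PMF.bind_pure μ]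
  exact stateDist_bind P π μ PMF.pure t

private lemma summable_geom_mul {γ : ℝ} (hγ0 : 0 ≤ γ) (hγ1 : γ < 1) (g : ℕ → ℝ) (M : ℝ)
    (hg : ∀ t, |g t| ≤ M) : Summable (fun t => γ ^ t * g t) := by
  apply Summable.of_abs
  apply Summable.of_nonneg_of_le (fun t => abs_nonneg _) (fun t => ?_)
    ((summable_geometric_of_lt_one hγ0 hγ1).mul_right M)
  rw [abs_mul, abs_pow, abs_of_nonneg hγ0]
  exact mul_le_mul_of_nonneg_left (hg t) (pow_nonneg hγ0 t)

private lemma tsum_geom_le {γ : ℝ} (hγ0 : 0 ≤ γ) (hγ1 : γ < 1) (g : ℕ → ℝ) (M : ℝ)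
    (h0 : ∀ t, 0 ≤ g t) (hM : ∀ t, g t ≤ M) :
    ∑' t : ℕ, γ ^ t * g t ≤ M / (1 - γ) := by
  have habs : ∀ t, |g t| ≤ M := fun t => by rw [abs_of_nonneg (h0 t)]; exact hM t
  calc ∑' t : ℕ, γ ^ t * g t ≤ ∑' t : ℕ, γ ^ t * M :=
        Summable.tsum_le_tsum (fun t => mul_le_mul_of_nonneg_left (hM t) (pow_nonneg hγ0 t))
          (summable_geom_mul hγ0 hγ1 g M habs)
          ((summable_geometric_of_lt_one hγ0 hγ1).mul_right M)
    _ = (1 - γ)⁻¹ * M := by rw [tsum_mul_right, tsum_geometric_of_lt_one hγ0 hγ1]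
    _ = M / (1 - γ) := by rw [inv_mul_eq_div]

private lemma rexp_bound (r : S → A → ℝ) (Rmax : ℝ)
    (hr : ∀ s a, 0 ≤ r s a ∧ r s a ≤ Rmax) (π : S → PMF A) (x : S) :
    0 ≤ pmfExp (π x) (fun a => r x a) ∧ pmfExp (π x) (fun a => r x a) ≤ Rmax :=
  ⟨pmfExp_nonneg _ _ fun a => (hr x a).1, pmfExp_le_of_le _ _ _ fun a => (hr x a).2⟩

private lemma rexp_abs (P : S → A → PMF S) (r : S → A → ℝ) (Rmax : ℝ)
    (hr : ∀ s a, 0 ≤ r s a ∧ r s a ≤ Rmax) (π : S → PMF A) (μ : PMF S) (t : ℕ) :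
    |pmfExp (stateDist P π μ t) fun x => pmfExp (π x) fun a => r x a| ≤ Rmax := by
  apply abs_pmfExp_le_const
  intro x
  rw [abs_of_nonneg (rexp_bound r Rmax hr π x).1]
  exact (rexp_bound r Rmax hr π x).2

private lemma Vval_nonneg {γ : ℝ} (P : S → A → PMF S) (r : S → A → ℝ) (hγ0 : 0 ≤ γ)
    (hr0 : ∀ s a, 0 ≤ r s a) (π : S → PMF A) (s : S) : 0 ≤ Vval P r γ π s :=
  tsum_nonneg fun t => mul_nonneg (pow_nonneg hγ0 t)
    (pmfExp_nonneg _ _ fun x => pmfExp_nonneg _ _ fun a => hr0 x a)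

private lemma Vval_le {γ : ℝ} (P : S → A → PMF S) (r : S → A → ℝ) (hγ0 : 0 ≤ γ) (hγ1 : γ < 1)
    (Rmax : ℝ) (hr : ∀ s a, 0 ≤ r s a ∧ r s a ≤ Rmax) (π : S → PMF A) (s : S) :
    Vval P r γ π s ≤ Rmax / (1 - γ) := by
  apply tsum_geom_le hγ0 hγ1
  · exact fun t => pmfExp_nonneg _ _ fun x => (rexp_bound r Rmax hr π x).1
  · exact fun t => pmfExp_le_of_le _ _ _ fun x => (rexp_bound r Rmax hr π x).2

private noncomputable def VofMu (P : S → A → PMF S) (r : S → A → ℝ) (γ : ℝ)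
    (π : S → PMF A) (μ : PMF S) : ℝ :=
  ∑' t : ℕ, γ ^ t * pmfExp (stateDist P π μ t) fun x => pmfExp (π x) fun a => r x a

private lemma VofMu_eq (P : S → A → PMF S) (r : S → A → ℝ) {γ : ℝ} (hγ0 : 0 ≤ γ) (hγ1 : γ < 1)
    (Rmax : ℝ) (hr : ∀ s a, 0 ≤ r s a ∧ r s a ≤ Rmax) (π : S → PMF A) (μ : PMF S) :
    VofMu P r γ π μ = pmfExp μ (Vval P r γ π) := by
  have hsummand : ∀ s : S, Summable (fun t : ℕ => (μ s).toReal *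
      (γ ^ t * pmfExp (stateDist P π (PMF.pure s) t) fun x => pmfExp (π x) fun a => r x a)) :=
    fun s => (summable_geom_mul hγ0 hγ1 _ Rmax
      (fun t => rexp_abs P r Rmax hr π (PMF.pure s) t)).mul_left _
  calc VofMu P r γ π μ
      = ∑' t : ℕ, ∑ s : S, (μ s).toReal *
          (γ ^ t * pmfExp (stateDist P π (PMF.pure s) t) fun x => pmfExp (π x) fun a => r x a) := by
        apply tsum_congr
        intro t
        rw [stateDist_eq_bind P π μ t, pmfExp_bind, ← pmfExp_const_mul]
        rfl
    _ = ∑ s : S, ∑' t : ℕ, (μ s).toReal *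
          (γ ^ t * pmfExp (stateDist P π (PMF.pure s) t) fun x => pmfExp (π x) fun a => r x a) :=
        Summable.tsum_finsetSum fun s _ => hsummand s
    _ = pmfExp μ (Vval P r γ π) := by
        rw [pmfExp]
        exact Finset.sum_congr rfl fun s _ => by rw [tsum_mul_left]; rfl

private lemma Jret_eq_VofMu (P : S → A → PMF S) (r : S → A → ℝ) {γ : ℝ} (hγ0 : 0 ≤ γ)
    (hγ1 : γ < 1) (Rmax : ℝ) (hr : ∀ s a, 0 ≤ r s a ∧ r s a ≤ Rmax) (π : S → PMF A) (μ : PMF S) :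
    Jret P r γ π μ = VofMu P r γ π μ :=
  (VofMu_eq P r hγ0 hγ1 Rmax hr π μ).symm

private lemma Vval_bellman (P : S → A → PMF S) (r : S → A → ℝ) {γ : ℝ} (hγ0 : 0 ≤ γ)
    (hγ1 : γ < 1) (Rmax : ℝ) (hr : ∀ s a, 0 ≤ r s a ∧ r s a ≤ Rmax) (π : S → PMF A) (s : S) :
    Vval P r γ π s = pmfExp (π s) (fun a => Qval P r γ π s a) := by
  have hsum : Summable (fun t : ℕ =>
      γ ^ t * pmfExp (stateDist P π (PMF.pure s) t) fun x => pmfExp (π x) fun a => r x a) :=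
    summable_geom_mul hγ0 hγ1 _ Rmax (fun t => rexp_abs P r Rmax hr π (PMF.pure s) t)
  have h1 : Vval P r γ π s
      = (γ ^ 0 * pmfExp (stateDist P π (PMF.pure s) 0) fun x => pmfExp (π x) fun a => r x a)
        + ∑' t : ℕ, γ ^ (t+1) * pmfExp (stateDist P π (PMF.pure s) (t+1))
            fun x => pmfExp (π x) fun a => r x a := hsum.tsum_eq_zero_add
  have hhead : (γ ^ 0 * pmfExp (stateDist P π (PMF.pure s) 0) fun x => pmfExp (π x) fun a => r x a)
      = pmfExp (π s) fun a => r s a := by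
    show (1 : ℝ) * pmfExp (PMF.pure s) _ = _
    rw [one_mul, pmfExp_pure]
  have hshift : ∀ t : ℕ, stateDist P π (PMF.pure s) (t+1)
      = (π s).bind fun a => stateDist P π (P s a) t := by
    intro t
    rw [stateDist_front, PMF.pure_bind, stateDist_bind]
  have hsummand : ∀ a : A, Summable (fun t : ℕ => ((π s) a).toReal *
      (γ * (γ ^ t * pmfExp (stateDist P π (P s a) t) fun x => pmfExp (π x) fun u => r x u))) := by
    intro a
    have := ((summable_geom_mul hγ0 hγ1 _ Rmax
      (fun t => rexp_abs P r Rmax hr π (P s a) t)).mul_left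
      (((π s) a).toReal * γ))
    simpa [mul_assoc] using this
  have htail : (∑' t : ℕ, γ ^ (t+1) * pmfExp (stateDist P π (PMF.pure s) (t+1))
        fun x => pmfExp (π x) fun a => r x a)
      = pmfExp (π s) (fun a => γ * pmfExp (P s a) (Vval P r γ π)) := by
    calc (∑' t : ℕ, γ ^ (t+1) * pmfExp (stateDist P π (PMF.pure s) (t+1))
          fun x => pmfExp (π x) fun a => r x a)
        = ∑' t : ℕ, ∑ a : A, ((π s) a).toReal *
            (γ * (γ ^ t * pmfExp (stateDist P π (P s a) t) fun x => pmfExp (π x) fun u => r x u)) := by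
          apply tsum_congr
          intro t
          rw [hshift t, pmfExp_bind]
          show γ ^ (t+1) * ∑ a : A, ((π s) a).toReal * _ = _
          rw [Finset.mul_sum]
          exact Finset.sum_congr rfl fun a _ => by ring
      _ = ∑ a : A, ∑' t : ℕ, ((π s) a).toReal *
            (γ * (γ ^ t * pmfExp (stateDist P π (P s a) t) fun x => pmfExp (π x) fun u => r x u)) :=
          Summable.tsum_finsetSum fun a _ => hsummand a
      _ = pmfExp (π s) (fun a => γ * pmfExp (P s a) (Vval P r γ π)) := by
          rw [pmfExp]
          apply Finset.sum_congr rfl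
          intro a _
          rw [tsum_mul_left, tsum_mul_left]
          congr 1
          rw [show (∑' t : ℕ, γ ^ t * pmfExp (stateDist P π (P s a) t)
            fun x => pmfExp (π x) fun u => r x u) = VofMu P r γ π (P s a) from rfl,
            VofMu_eq P r hγ0 hγ1 Rmax hr π (P s a)]
  rw [h1, hhead, htail, ← pmfExp_add]
  exact pmfExp_congr _ _ _ fun a => by rw [Qval]

private lemma Qval_bounds (P : S → A → PMF S) (r : S → A → ℝ) {γ : ℝ} (hγ0 : 0 ≤ γ)
    (hγ1 : γ < 1) (Rmax : ℝ) (hr : ∀ s a, 0 ≤ r s a ∧ r s a ≤ Rmax) (π : S → PMF A)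
    (s : S) (a : A) : 0 ≤ Qval P r γ π s a ∧ Qval P r γ π s a ≤ Rmax / (1 - γ) := by
  have h1γ : 0 < 1 - γ := by linarith
  constructor
  · rw [Qval]
    have h := pmfExp_nonneg (P s a) (Vval P r γ π)
      (fun x => Vval_nonneg P r hγ0 (fun s' a' => (hr s' a').1) π x)
    nlinarith [(hr s a).1]
  · rw [Qval]
    have h1 : pmfExp (P s a) (Vval P r γ π) ≤ Rmax / (1 - γ) :=
      pmfExp_le_of_le _ _ _ fun x => Vval_le P r hγ0 hγ1 Rmax hr π x
    have h2 := (hr s a).2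
    have key : Rmax + γ * (Rmax / (1 - γ)) = Rmax / (1 - γ) := by
      field_simp
      ring
    nlinarith [mul_le_mul_of_nonneg_left h1 hγ0]

private lemma Adv_abs_le (P : S → A → PMF S) (r : S → A → ℝ) {γ : ℝ} (hγ0 : 0 ≤ γ)
    (hγ1 : γ < 1) (Rmax : ℝ) (hr : ∀ s a, 0 ≤ r s a ∧ r s a ≤ Rmax) (π : S → PMF A)
    (s : S) (a : A) : |Adv P r γ π s a| ≤ Rmax / (1 - γ) := by
  rw [Adv, abs_le]
  have hQ := Qval_bounds P r hγ0 hγ1 Rmax hr π s a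
  have hV1 := Vval_nonneg P r hγ0 (fun s' a' => (hr s' a').1) π s
  have hV2 := Vval_le P r hγ0 hγ1 Rmax hr π s
  constructor <;> [linarith [hQ.1]; linarith [hQ.2]]

private lemma pmfExp_adv_self (P : S → A → PMF S) (r : S → A → ℝ) {γ : ℝ} (hγ0 : 0 ≤ γ)
    (hγ1 : γ < 1) (Rmax : ℝ) (hr : ∀ s a, 0 ≤ r s a ∧ r s a ≤ Rmax) (π : S → PMF A) (s : S) :
    pmfExp (π s) (fun a => Adv P r γ π s a) = 0 := by
  simp only [Adv]
  rw [pmfExp_sub, pmfExp_const, Vval_bellman P r hγ0 hγ1 Rmax hr π s, sub_self]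

private lemma pdl (P : S → A → PMF S) (r : S → A → ℝ) {γ : ℝ} (hγ0 : 0 ≤ γ) (hγ1 : γ < 1)
    (Rmax : ℝ) (hr : ∀ s a, 0 ≤ r s a ∧ r s a ≤ Rmax) (π πb : S → PMF A) (μ : PMF S) :
    Jret P r γ π μ - Jret P r γ πb μ
      = ∑' t : ℕ, γ ^ t * pmfExp (stateDist P π μ t)
          (fun x => pmfExp (π x) fun a => Adv P r γ πb x a) := by
  have h1γ : 0 < 1 - γ := by linarith
  set M := Rmax / (1 - γ) with hM
  set d : ℕ → PMF S := stateDist P π μ with hd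
  set Vb : S → ℝ := Vval P r γ πb with hVb
  have hVbabs : ∀ x, |Vb x| ≤ M := by
    intro x
    rw [hVb, abs_of_nonneg (Vval_nonneg P r hγ0 (fun s' a' => (hr s' a').1) πb x)]
    exact Vval_le P r hγ0 hγ1 Rmax hr πb x
  set aa : ℕ → ℝ := fun t => γ ^ t * pmfExp (d t) Vb with haa
  set bb : ℕ → ℝ := fun t => γ ^ t * pmfExp (d t)
    (fun x => pmfExp (π x) fun u => Adv P r γ πb x u) with hbb
  set cc : ℕ → ℝ := fun t => γ ^ t * pmfExp (d t)
    (fun x => pmfExp (π x) fun u => r x u) with hcc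
  have hkey : ∀ t, aa (t+1) - aa t = bb t - cc t := by
    intro t
    have h1 : aa (t+1)
        = γ ^ t * pmfExp (d t) (fun x => pmfExp (π x) fun u => γ * pmfExp (P x u) Vb) := by
      show γ ^ (t+1) * pmfExp ((d t).bind fun x => (π x).bind fun u => P x u) Vb = _
      rw [pmfExp_bind]
      calc γ ^ (t+1) * pmfExp (d t) (fun x => pmfExp ((π x).bind fun u => P x u) Vb)
          = γ ^ t * (γ * pmfExp (d t) (fun x => pmfExp (π x) fun u => pmfExp (P x u) Vb)) := by
            rw [pmfExp_congr (d t) _ _ (fun x => pmfExp_bind (π x) _ Vb)]; ring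
        _ = γ ^ t * pmfExp (d t) (fun x => γ * pmfExp (π x) fun u => pmfExp (P x u) Vb) := by
            rw [pmfExp_const_mul]
        _ = γ ^ t * pmfExp (d t) (fun x => pmfExp (π x) fun u => γ * pmfExp (P x u) Vb) := by
            rw [pmfExp_congr (d t) _ _ (fun x => (pmfExp_const_mul (π x) _ γ))]
    have hptw : ∀ x, (pmfExp (π x) fun u => Adv P r γ πb x u)
        - (pmfExp (π x) fun u => r x u) + Vb x
        = pmfExp (π x) fun u => γ * pmfExp (P x u) Vb := by
      intro x
      have e1 : (pmfExp (π x) fun u => Adv P r γ πb x u)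
          = (pmfExp (π x) fun u => Qval P r γ πb x u) - Vval P r γ πb x := by
        simp only [Adv]
        rw [pmfExp_sub, pmfExp_const]
      have e2 : (pmfExp (π x) fun u => Qval P r γ πb x u) - (pmfExp (π x) fun u => r x u)
          = pmfExp (π x) fun u => γ * pmfExp (P x u) Vb := by
        rw [← pmfExp_sub]
        apply pmfExp_congr
        intro u
        simp only [Qval, hVb]
        ring
      have e3 : Vb x = Vval P r γ πb x := rfl
      rw [e1, ← e2, e3]
      ring
    have h2 : bb t - cc t + aa t
        = γ ^ t * pmfExp (d t) (fun x => pmfExp (π x) fun u => γ * pmfExp (P x u) Vb) := by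
      rw [← pmfExp_congr (d t) _ _ hptw, pmfExp_add, pmfExp_sub]
      simp only [hbb, hcc, haa]
      ring
    rw [h1, ← h2]
    ring
  have hAdvE : ∀ t, |pmfExp (d t) (fun x => pmfExp (π x) fun u => Adv P r γ πb x u)| ≤ M :=
    fun t => abs_pmfExp_le_const _ _ _ fun x => abs_pmfExp_le_const _ _ _ fun u =>
      Adv_abs_le P r hγ0 hγ1 Rmax hr πb x u
  have hsum_bb : Summable bb := by
    rw [hbb]; exact summable_geom_mul hγ0 hγ1 _ M hAdvE
  have hsum_cc : Summable cc := by
    rw [hcc]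
    exact summable_geom_mul hγ0 hγ1 _ Rmax fun t => rexp_abs P r Rmax hr π μ t
  have htendsa : Filter.Tendsto aa Filter.atTop (nhds 0) := by
    apply squeeze_zero_norm (a := fun t => γ ^ t * M)
    · intro t
      rw [haa]
      show ‖γ ^ t * pmfExp (d t) Vb‖ ≤ γ ^ t * M
      rw [Real.norm_eq_abs, abs_mul, abs_pow, abs_of_nonneg hγ0]
      exact mul_le_mul_of_nonneg_left (abs_pmfExp_le_const _ _ _ hVbabs) (pow_nonneg hγ0 t)
    · have := (tendsto_pow_atTop_nhds_zero_of_lt_one hγ0 hγ1).mul_const M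
      simpa using this
  have hdiff_sum : Summable (fun t => aa (t+1) - aa t) := by
    have heq : (fun t => aa (t+1) - aa t) = fun t => bb t - cc t := funext hkey
    rw [heq]
    exact hsum_bb.sub hsum_cc
  have hHasSum : HasSum (fun t => aa (t+1) - aa t) (0 - aa 0) := by
    rw [hdiff_sum.hasSum_iff_tendsto_nat]
    have hps : ∀ n, ∑ i ∈ Finset.range n, (aa (i+1) - aa i) = aa n - aa 0 :=
      fun n => Finset.sum_range_sub aa n
    simp only [hps]
    exact htendsa.sub_const (aa 0)
  have hbc : ∑' t, bb t = (0 - aa 0) + ∑' t, cc t := by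
    have heq : ∀ t, bb t = (aa (t+1) - aa t) + cc t := fun t => by linarith [hkey t]
    rw [tsum_congr heq, Summable.tsum_add hdiff_sum hsum_cc, hHasSum.tsum_eq]
  have ha0 : aa 0 = Jret P r γ πb μ := by
    rw [haa]
    show γ ^ 0 * pmfExp (stateDist P π μ 0) Vb = _
    rw [pow_zero, one_mul]
    rfl
  have hcJ : ∑' t, cc t = Jret P r γ π μ := by
    rw [hcc, Jret_eq_VofMu P r hγ0 hγ1 Rmax hr π μ]
    rfl
  show Jret P r γ π μ - Jret P r γ πb μ = ∑' t, bb t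
  rw [hbc, hcJ, ha0]
  ring

private lemma abs_tsum_le (f : ℕ → ℝ) (h : Summable (fun t => |f t|)) :
    |∑' t, f t| ≤ ∑' t, |f t| := by
  have h' : Summable (fun t => ‖f t‖) := by simpa [Real.norm_eq_abs] using h
  have := norm_tsum_le_tsum_norm h'
  simpa [Real.norm_eq_abs] using this

end MDPLemmas

set_option maxHeartbeats 1000000 in
/-- KL-controlled deviation of the mixed-policy return, pointwise form: if `0 ≤ r ≤ R_max`
and the student policy dominates the teacher policy (`π^s(s)(a) > 0` whenever
`π^t(s)(a) > 0`), then
`|J(π_mix) − J(π^t)| ≤ (√2 R_max/(1−γ)²) E_{s ~ ν^{π_mix,μ}}[(1−T(s)) √(D_KL(π^t(s)‖π^s(s)))]`. -/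
theorem mix_return_kl_bound {S A : Type*} [Fintype S] [Nonempty S] [Fintype A] [Nonempty A]
    (P : S → A → PMF S) (r : S → A → ℝ) (γ : ℝ) (hγ0 : 0 ≤ γ) (hγ1 : γ < 1)
    (Rmax : ℝ) (hr : ∀ (s : S) (a : A), 0 ≤ r s a ∧ r s a ≤ Rmax)
    (πt πs : S → PMF A) (habs : ∀ (s : S) (a : A), 0 < πt s a → 0 < πs s a)
    (T : S → Bool) (μ : PMF S) :
    |Jret P r γ (mixPolicy πt πs T) μ - Jret P r γ πt μ| ≤
      Real.sqrt 2 * Rmax / (1 - γ) ^ 2 *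
        ∑ s, visit P (mixPolicy πt πs T) μ γ s *
          ((1 - (if T s then (1 : ℝ) else 0)) * Real.sqrt (pmfKL (πt s) (πs s))) := by
  classical
  obtain ⟨s0⟩ := (inferInstance : Nonempty S)
  obtain ⟨a0⟩ := (inferInstance : Nonempty A)
  have hRm : 0 ≤ Rmax := le_trans (hr s0 a0).1 (hr s0 a0).2
  have h1γ : 0 < 1 - γ := by linarith
  set π' : S → PMF A := mixPolicy πt πs T with hπ'
  set M : ℝ := Rmax / (1 - γ) with hMdef
  have hM0 : 0 ≤ M := div_nonneg hRm h1γ.le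
  set w : S → ℝ := fun x => if T x then 0 else M * Real.sqrt (pmfKL (πt x) (πs x)) with hw
  have hw0 : ∀ x, 0 ≤ w x := by
    intro x
    rw [hw]
    by_cases hT : T x <;> simp [hT]
    positivity
  -- per-state bound on the expected advantage
  have hwb : ∀ x, |pmfExp (π' x) (fun a => Adv P r γ πt x a)| ≤ w x := by
    intro x
    by_cases hT : T x
    · have : π' x = πt x := by rw [hπ', mixPolicy, if_pos hT]
      rw [this, pmfExp_adv_self P r hγ0 hγ1 Rmax hr πt x, abs_zero, hw]
      simp [hT]
    · have hpx : π' x = πs x := by rw [hπ', mixPolicy, if_neg hT]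
      have e1 : pmfExp (π' x) (fun a => Adv P r γ πt x a)
          = ∑ a, (((πs x) a).toReal - ((πt x) a).toReal) * Qval P r γ πt x a := by
        rw [hpx]
        simp only [Adv]
        rw [pmfExp_sub, pmfExp_const, Vval_bellman P r hγ0 hγ1 Rmax hr πt x]
        rw [pmfExp, pmfExp, ← Finset.sum_sub_distrib]
        exact Finset.sum_congr rfl fun a _ => by ring
      rw [e1]
      have hQb : ∀ a, 0 ≤ Qval P r γ πt x a ∧ Qval P r γ πt x a ≤ M :=
        fun a => Qval_bounds P r hγ0 hγ1 Rmax hr πt x a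
      have hED := expDiff_le (πs x) (πt x) (fun a => Qval P r γ πt x a) M hQb
      have hsym : l1Dist (πs x) (πt x) = l1Dist (πt x) (πs x) :=
        Finset.sum_congr rfl fun a _ => abs_sub_comm _ _
      have hpin := pinsker_l1 (πt x) (πs x) (habs x)
      have hl10 : 0 ≤ l1Dist (πt x) (πs x) := Finset.sum_nonneg fun a _ => abs_nonneg _
      calc |∑ a, (((πs x) a).toReal - ((πt x) a).toReal) * Qval P r γ πt x a|
          ≤ M / 2 * l1Dist (πs x) (πt x) := hED
        _ = M / 2 * l1Dist (πt x) (πs x) := by rw [hsym]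
        _ ≤ M / 2 * (2 * Real.sqrt (pmfKL (πt x) (πs x))) := by
            apply mul_le_mul_of_nonneg_left hpin (by positivity)
        _ = w x := by simp only [hw]; rw [if_neg hT]; ring
  have hpdl := pdl P r hγ0 hγ1 Rmax hr π' πt μ
  set d : ℕ → PMF S := stateDist P π' μ with hd
  set X : ℝ := ∑' t : ℕ, γ ^ t * pmfExp (d t) w with hX
  set Cw : ℝ := ∑ x, |w x| with hCw
  have hsw : Summable (fun t : ℕ => γ ^ t * pmfExp (d t) w) :=
    summable_geom_mul hγ0 hγ1 _ Cw fun t => abs_pmfExp_le_sum (d t) w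
  have hbsummand : Summable (fun t : ℕ => γ ^ t * pmfExp (d t)
      (fun x => pmfExp (π' x) fun a => Adv P r γ πt x a)) :=
    summable_geom_mul hγ0 hγ1 _ M fun t => abs_pmfExp_le_const _ _ _ fun x =>
      abs_pmfExp_le_const _ _ _ fun a => Adv_abs_le P r hγ0 hγ1 Rmax hr πt x a
  have habsX : |Jret P r γ π' μ - Jret P r γ πt μ| ≤ X := by
    rw [hpdl]
    have hb_le : ∀ t : ℕ, |γ ^ t * pmfExp (d t)
        (fun x => pmfExp (π' x) fun a => Adv P r γ πt x a)| ≤ γ ^ t * pmfExp (d t) w := by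
      intro t
      rw [abs_mul, abs_pow, abs_of_nonneg hγ0]
      exact mul_le_mul_of_nonneg_left (abs_pmfExp_le _ _ _ hwb) (pow_nonneg hγ0 t)
    calc |∑' t : ℕ, γ ^ t * pmfExp (d t) (fun x => pmfExp (π' x) fun a => Adv P r γ πt x a)|
        ≤ ∑' t : ℕ, |γ ^ t * pmfExp (d t) (fun x => pmfExp (π' x) fun a => Adv P r γ πt x a)| :=
          abs_tsum_le _ hbsummand.abs
      _ ≤ X := Summable.tsum_le_tsum hb_le hbsummand.abs hsw
  -- visitation identity
  have hsummand2 : ∀ s : S, Summable (fun t : ℕ => γ ^ t * ((d t s).toReal * w s)) := by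
    intro s
    apply summable_geom_mul hγ0 hγ1 _ |w s|
    intro t
    rw [abs_mul]
    have h1 : (d t s).toReal ≤ 1 := by
      have := ENNReal.toReal_mono (by simp) (PMF.coe_le_one (d t) s)
      simpa using this
    rw [abs_of_nonneg (ENNReal.toReal_nonneg (a := d t s))]
    nlinarith [abs_nonneg (w s), ENNReal.toReal_nonneg (a := d t s)]
  have hXid : ∑ s, visit P π' μ γ s * w s = (1 - γ) * X := by
    calc ∑ s, visit P π' μ γ s * w s
        = ∑ s : S, (1 - γ) * ∑' t : ℕ, γ ^ t * ((d t s).toReal * w s) := by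
          apply Finset.sum_congr rfl
          intro s _
          rw [visit, mul_assoc, ← tsum_mul_right]
          congr 1
          exact tsum_congr fun t => by ring
      _ = (1 - γ) * ∑ s : S, ∑' t : ℕ, γ ^ t * ((d t s).toReal * w s) := by
          rw [Finset.mul_sum]
      _ = (1 - γ) * ∑' t : ℕ, ∑ s : S, γ ^ t * ((d t s).toReal * w s) := by
          rw [Summable.tsum_finsetSum fun s _ => hsummand2 s]
      _ = (1 - γ) * X := by
          rw [hX]
          congr 1
          apply tsum_congr
          intro t
          rw [pmfExp, Finset.mul_sum]
  set Y : ℝ := ∑ s, visit P π' μ γ s * (if T s then 0 else Real.sqrt (pmfKL (πt s) (πs s)))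
    with hY
  have hvis0 : ∀ s, 0 ≤ visit P π' μ γ s := by
    intro s
    rw [visit]
    apply mul_nonneg h1γ.le
    exact tsum_nonneg fun t => mul_nonneg (pow_nonneg hγ0 t) ENNReal.toReal_nonneg
  have hY0 : 0 ≤ Y := by
    apply Finset.sum_nonneg
    intro s _
    apply mul_nonneg (hvis0 s)
    by_cases hT : T s <;> simp [hT, Real.sqrt_nonneg]
  have hwy : ∑ s, visit P π' μ γ s * w s = M * Y := by
    rw [hY, Finset.mul_sum]
    apply Finset.sum_congr rfl
    intro s _
    rw [hw]
    by_cases hT : T s <;> simp [hT] <;> ring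
  have hXY : X = M * Y / (1 - γ) := by
    have h := hXid
    rw [hwy] at h
    rw [eq_div_iff h1γ.ne']
    linear_combination -h
  have hfin : |Jret P r γ π' μ - Jret P r γ πt μ| ≤ Rmax / (1 - γ) ^ 2 * Y := by
    calc |Jret P r γ π' μ - Jret P r γ πt μ| ≤ X := habsX
      _ = M * Y / (1 - γ) := hXY
      _ = Rmax / (1 - γ) ^ 2 * Y := by
          rw [hMdef, div_mul_eq_mul_div, div_div, div_mul_eq_mul_div, sq]
  have hYeq : Y = ∑ s, visit P π' μ γ s *
      ((1 - (if T s then (1 : ℝ) else 0)) * Real.sqrt (pmfKL (πt s) (πs s))) := by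
    rw [hY]
    apply Finset.sum_congr rfl
    intro s _
    by_cases hT : T s <;> simp [hT]
  have hsqrt2 : (1 : ℝ) ≤ Real.sqrt 2 := by
    rw [show (1 : ℝ) = Real.sqrt 1 by simp]
    exact Real.sqrt_le_sqrt (by norm_num)
  calc |Jret P r γ π' μ - Jret P r γ πt μ| ≤ Rmax / (1 - γ) ^ 2 * Y := hfin
    _ ≤ Real.sqrt 2 * Rmax / (1 - γ) ^ 2 * Y := by
        apply mul_le_mul_of_nonneg_right _ hY0
        have h2 : Rmax ≤ Real.sqrt 2 * Rmax := by nlinarith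
        have hpow : (0:ℝ) < (1 - γ)^2 := by positivity
        exact (div_le_div_iff_of_pos_right hpow).mpr h2
    _ = _ := by rw [hYeq]
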